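/- Let (X, 𝒯, ≤, d) be a weakly stably causal spacetime and ≤↓ the lifted order on X × ℝ. The following are equivalent: (i) for every compact C ⊆ X the set J(C) := i(C) ∩ d(C) (where i(C) is the set of points above some point of C and d(C) the set below some point of C) is compact, and d is finite; (ii) for every compact K ⊆ X × ℝ the set J↓(K) := i↓(K) ∩ d↓(K) is compact. -/

import Mathlib

open scoped ENNReal
open Set

lemma aux_closed_rel {Y Z : Type*} [TopologicalSpace Y] [TopologicalSpace Z]
    {S : Set (Y × Z)} (hS : IsClosed S) {K : Set Y} (hK : IsCompact K) :
    IsClosed {z : Z | ∃ y ∈ K, (y, z) ∈ S} := by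
  rw [← isOpen_compl_iff]
  rw [isOpen_iff_mem_nhds]
  intro z hz
  have hsub : K ×ˢ ({z} : Set Z) ⊆ Sᶜ := by
    rintro ⟨y, z'⟩ ⟨hy, hz'⟩
    simp only [mem_singleton_iff] at hz'
    subst hz'
    intro hmem
    exact hz ⟨y, hy, hmem⟩
  obtain ⟨U, V, hU, hV, hKU, hzV, hUV⟩ :=
    generalized_tube_lemma hK isCompact_singleton hS.isOpen_compl hsub
  refine Filter.mem_of_superset (hV.mem_nhds (hzV rfl)) ?_
  intro z' hz' ⟨y, hy, hmem⟩
  exact hUV ⟨hKU hy, hz'⟩ hmem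

lemma aux_R_closed {X : Type*} [TopologicalSpace X] (le : X → X → Prop)
    (hclosed : IsClosed {p : X × X | le p.1 p.2})
    (d : X → X → ℝ≥0∞)
    (husc : UpperSemicontinuous (fun p : X × X => d p.1 p.2)) :
    IsClosed {PQ : (X × ℝ) × (X × ℝ) |
      le PQ.1.1 PQ.2.1 ∧ (PQ.2.2 : EReal) ≤ (PQ.1.2 : EReal) + (d PQ.1.1 PQ.2.1 : EReal)} := by
  have h1 : IsClosed {PQ : (X × ℝ) × (X × ℝ) | le PQ.1.1 PQ.2.1} := by
    have : Continuous (fun PQ : (X × ℝ) × (X × ℝ) => (PQ.1.1, PQ.2.1)) := by fun_prop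
    exact hclosed.preimage this
  have h2 : IsClosed {PQ : (X × ℝ) × (X × ℝ) |
      (PQ.2.2 : EReal) ≤ (PQ.1.2 : EReal) + (d PQ.1.1 PQ.2.1 : EReal)} := by
    rw [← isOpen_compl_iff]
    have : {PQ : (X × ℝ) × (X × ℝ) |
        (PQ.2.2 : EReal) ≤ (PQ.1.2 : EReal) + (d PQ.1.1 PQ.2.1 : EReal)}ᶜ =
        ⋃ q : ℚ, {PQ : (X × ℝ) × (X × ℝ) | d PQ.1.1 PQ.2.1 < ENNReal.ofReal q}
          ∩ {PQ | PQ.1.2 + (q : ℝ) < PQ.2.2} := by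
      ext ⟨⟨x, s⟩, ⟨y, t⟩⟩
      simp only [mem_compl_iff, mem_setOf_eq, not_le, mem_iUnion, mem_inter_iff]
      constructor
      · intro h
        have hne : d x y ≠ ⊤ := by
          intro htop
          rw [htop] at h
          simp only [EReal.coe_ennreal_top, EReal.coe_add_top] at h
          exact (not_top_lt h)
        have hco : ((d x y).toReal : EReal) = ((d x y : ℝ≥0∞) : EReal) := by
          rw [← EReal.toReal_coe_ennreal]
          exact EReal.coe_toReal (by simpa [EReal.coe_ennreal_eq_top_iff])
            (ne_of_gt (lt_of_lt_of_le EReal.bot_lt_zero (EReal.coe_ennreal_nonneg _)))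
        have hreal : s + (d x y).toReal < t := by
          have : ((s + (d x y).toReal : ℝ) : EReal) < (t : EReal) := by
            rw [EReal.coe_add, hco]; exact h
          exact_mod_cast this
        obtain ⟨q, hq1, hq2⟩ := exists_rat_btwn (show (d x y).toReal < t - s by linarith)
        refine ⟨q, ?_, by linarith⟩
        rw [ENNReal.lt_ofReal_iff_toReal_lt hne]
        exact hq1
      · rintro ⟨q, hq1, hq2⟩
        have hq0 : (0 : ℝ) ≤ q := by
          by_contra hneg
          push_neg at hneg
          rw [ENNReal.ofReal_eq_zero.2 (le_of_lt hneg)] at hq1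
          exact (not_lt_of_ge zero_le) hq1
        have hcoe : (ENNReal.ofReal (q : ℝ) : EReal) = ((q : ℝ) : EReal) := by
          rw [EReal.coe_ennreal_ofReal, max_eq_left hq0]
        calc ((s : ℝ) : EReal) + (d x y : EReal)
            < (s : EReal) + ((q : ℝ) : EReal) := by
              apply EReal.add_lt_add_left_coe
              rw [← hcoe]
              exact_mod_cast hq1
          _ = ((s + (q : ℝ) : ℝ) : EReal) := by rw [EReal.coe_add]
          _ < (t : EReal) := by exact_mod_cast hq2
    rw [this]
    apply isOpen_iUnion
    intro q
    apply IsOpen.inter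
    · have hopen : IsOpen {p : X × X | d p.1 p.2 < ENNReal.ofReal q} :=
        husc.isOpen_preimage _
      have : Continuous (fun PQ : (X × ℝ) × (X × ℝ) => (PQ.1.1, PQ.2.1)) := by fun_prop
      exact hopen.preimage this
    · apply isOpen_lt <;> fun_prop
  exact h1.inter h2

lemma aux_d_bdd {X : Type*} [TopologicalSpace X]
    (d : X → X → ℝ≥0∞)
    (husc : UpperSemicontinuous (fun p : X × X => d p.1 p.2))
    (hfin : ∀ x y, d x y ≠ ⊤)
    {T : Set (X × X)} (hT : IsCompact T) :
    ∃ n : ℕ, ∀ p ∈ T, d p.1 p.2 < n := by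
  have hcover : T ⊆ ⋃ n : ℕ, {p : X × X | d p.1 p.2 < n} := by
    intro p _
    obtain ⟨n, hn⟩ := ENNReal.exists_nat_gt (hfin p.1 p.2)
    exact mem_iUnion.2 ⟨n, hn⟩
  obtain ⟨s, hs⟩ := hT.elim_finite_subcover (fun n : ℕ => {p : X × X | d p.1 p.2 < n})
    (fun n => husc.isOpen_preimage (n : ℝ≥0∞)) hcover
  rcases s.eq_empty_or_nonempty with rfl | hne
  · refine ⟨0, fun p hp => ?_⟩
    simpa using hs hp
  · obtain ⟨m, hm⟩ := s.exists_max_image id hne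
    refine ⟨m, fun p hp => ?_⟩
    obtain ⟨n, hn, hlt⟩ := mem_iUnion₂.1 (hs hp)
    exact lt_of_lt_of_le hlt (by exact_mod_cast Nat.cast_le.2 (hm.2 n hn))

theorem stmt8 {X : Type*} [TopologicalSpace X] (le : X → X → Prop)
    (hrefl : ∀ x, le x x) (htrans : ∀ x y z, le x y → le y z → le x z)
    (hanti : ∀ x y, le x y → le y x → x = y)
    (hclosed : IsClosed {p : X × X | le p.1 p.2})
    (d : X → X → ℝ≥0∞)
    (husc : UpperSemicontinuous (fun p : X × X => d p.1 p.2))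
    (hvanish : ∀ x y, ¬ le x y → d x y = 0)
    (hrev : ∀ x y z, le x y → le y z → d x y + d y z ≤ d x z)
    (hdiag : ∀ x, d x x = 0)
    (R : X × ℝ → X × ℝ → Prop)
    (hR : ∀ P Q : X × ℝ, R P Q ↔ le P.1 Q.1 ∧ (Q.2 : EReal) ≤ (P.2 : EReal) + (d P.1 Q.1 : EReal)) :
    ((∀ C : Set X, IsCompact C →
        IsCompact {y : X | (∃ x ∈ C, le x y) ∧ (∃ z ∈ C, le y z)}) ∧ (∀ x y, d x y ≠ ⊤)) ↔
    (∀ K : Set (X × ℝ), IsCompact K →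
        IsCompact {Q : X × ℝ | (∃ P ∈ K, R P Q) ∧ (∃ S ∈ K, R Q S)}) := by
  constructor
  · rintro ⟨hJ, hfin⟩ K hK
    rcases K.eq_empty_or_nonempty with rfl | hKne
    · convert isCompact_empty
      ext Q
      simp
    -- closedness of the two relation-image sets
    have hS1 : IsClosed {PQ : (X × ℝ) × (X × ℝ) |
        le PQ.1.1 PQ.2.1 ∧ (PQ.2.2 : EReal) ≤ (PQ.1.2 : EReal) + (d PQ.1.1 PQ.2.1 : EReal)} :=
      aux_R_closed le hclosed d husc
    have hA : IsClosed {Q : X × ℝ | ∃ P ∈ K, R P Q} := by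
      have := aux_closed_rel hS1 hK
      convert this using 1
      ext Q
      simp only [mem_setOf_eq]
      constructor
      · rintro ⟨P, hP, hRPQ⟩; exact ⟨P, hP, (hR P Q).1 hRPQ⟩
      · rintro ⟨P, hP, hmem⟩; exact ⟨P, hP, (hR P Q).2 hmem⟩
    have hB : IsClosed {Q : X × ℝ | ∃ S ∈ K, R Q S} := by
      have hS2 : IsClosed (Prod.swap ⁻¹' {PQ : (X × ℝ) × (X × ℝ) |
          le PQ.1.1 PQ.2.1 ∧ (PQ.2.2 : EReal) ≤ (PQ.1.2 : EReal) + (d PQ.1.1 PQ.2.1 : EReal)}) :=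
        hS1.preimage continuous_swap
      have := aux_closed_rel hS2 hK
      convert this using 1
      ext Q
      simp only [mem_setOf_eq, mem_preimage]
      constructor
      · rintro ⟨S, hS, hRQS⟩; exact ⟨S, hS, (hR Q S).1 hRQS⟩
      · rintro ⟨S, hS, hmem⟩; exact ⟨S, hS, (hR Q S).2 hmem⟩
    -- the enclosing compact box
    set C : Set X := Prod.fst '' K with hC
    have hCc : IsCompact C := hK.image continuous_fst
    set J : Set X := {y : X | (∃ x ∈ C, le x y) ∧ (∃ z ∈ C, le y z)} with hJdef
    have hJc : IsCompact J := hJ C hCc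
    have hCJ : C ⊆ J := fun x hx => ⟨⟨x, hx, hrefl x⟩, ⟨x, hx, hrefl x⟩⟩
    obtain ⟨n, hn⟩ := aux_d_bdd d husc hfin (hJc.prod hJc)
    have hsndc : IsCompact (Prod.snd '' K) := hK.image continuous_snd
    obtain ⟨b, hbmem, hb⟩ := hsndc.exists_isGreatest (hKne.image _)
    obtain ⟨a, hamem, ha⟩ := hsndc.exists_isLeast (hKne.image _)
    have hsub : {Q : X × ℝ | (∃ P ∈ K, R P Q) ∧ (∃ S ∈ K, R Q S)} ⊆
        J ×ˢ Icc (a - n) (b + n) := by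
      rintro ⟨y, t⟩ ⟨⟨⟨x, s⟩, hPK, hPQ⟩, ⟨⟨z, u⟩, hSK, hQS⟩⟩
      obtain ⟨hxy, ht⟩ := (hR _ _).1 hPQ
      obtain ⟨hyz, hu⟩ := (hR _ _).1 hQS
      simp only at hxy ht hyz hu
      have hxC : x ∈ C := ⟨(x, s), hPK, rfl⟩
      have hzC : z ∈ C := ⟨(z, u), hSK, rfl⟩
      have hyJ : y ∈ J := ⟨⟨x, hxC, hxy⟩, ⟨z, hzC, hyz⟩⟩
      have hsb : s ≤ b := hb ⟨(x, s), hPK, rfl⟩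
      have hau : a ≤ u := ha ⟨(z, u), hSK, rfl⟩
      have hnn : ((n : ℝ≥0∞) : EReal) = ((n : ℝ) : EReal) := by norm_cast
      have hd1 : (d x y : EReal) ≤ ((n : ℝ) : EReal) := by
        rw [← hnn]
        exact le_of_lt (EReal.coe_ennreal_lt_coe_ennreal_iff.2 (hn (x, y) ⟨hCJ hxC, hyJ⟩))
      have hd2 : (d y z : EReal) ≤ ((n : ℝ) : EReal) := by
        rw [← hnn]
        exact le_of_lt (EReal.coe_ennreal_lt_coe_ennreal_iff.2 (hn (y, z) ⟨hyJ, hCJ hzC⟩))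
      have htub : t ≤ b + n := by
        have : (t : EReal) ≤ ((b + n : ℝ) : EReal) := by
          calc (t : EReal) ≤ (s : EReal) + (d x y : EReal) := ht
            _ ≤ (s : EReal) + ((n : ℝ) : EReal) := add_le_add_right hd1 _
            _ = ((s + n : ℝ) : EReal) := by rw [EReal.coe_add]
            _ ≤ ((b + n : ℝ) : EReal) := by exact_mod_cast add_le_add_left hsb _
        exact_mod_cast this
      have htlb : a - n ≤ t := by
        have : (u : EReal) ≤ ((t + n : ℝ) : EReal) := by
          calc (u : EReal) ≤ (t : EReal) + (d y z : EReal) := hu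
            _ ≤ (t : EReal) + ((n : ℝ) : EReal) := add_le_add_right hd2 _
            _ = ((t + n : ℝ) : EReal) := by rw [EReal.coe_add]
        have hun : u ≤ t + n := by exact_mod_cast this
        linarith
      exact ⟨hyJ, htlb, htub⟩
    exact IsCompact.of_isClosed_subset (hJc.prod isCompact_Icc) (hA.inter hB) hsub
  · intro h
    constructor
    · intro C hC
      have hKc : IsCompact (C ×ˢ ({0} : Set ℝ)) := hC.prod isCompact_singleton
      have heq : {y : X | (∃ x ∈ C, le x y) ∧ (∃ z ∈ C, le y z)} =
          Prod.fst '' {Q : X × ℝ | (∃ P ∈ C ×ˢ ({0} : Set ℝ), R P Q) ∧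
            (∃ S ∈ C ×ˢ ({0} : Set ℝ), R Q S)} := by
        ext y
        constructor
        · rintro ⟨⟨x, hxC, hxy⟩, ⟨z, hzC, hyz⟩⟩
          refine ⟨(y, 0), ⟨⟨(x, 0), ⟨hxC, rfl⟩, (hR _ _).2 ⟨hxy, ?_⟩⟩,
            ⟨(z, 0), ⟨hzC, rfl⟩, (hR _ _).2 ⟨hyz, ?_⟩⟩⟩, rfl⟩
          · simp only [EReal.coe_zero, zero_add]
            exact EReal.coe_ennreal_nonneg _
          · simp only [EReal.coe_zero, zero_add]
            exact EReal.coe_ennreal_nonneg _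
        · rintro ⟨⟨y', t⟩, ⟨⟨⟨x, s⟩, ⟨hxC, _⟩, h1⟩, ⟨⟨z, u⟩, ⟨hzC, _⟩, h2⟩⟩, rfl⟩
          exact ⟨⟨x, hxC, ((hR _ _).1 h1).1⟩, ⟨z, hzC, ((hR _ _).1 h2).1⟩⟩
      rw [heq]
      exact (h _ hKc).image continuous_fst
    · intro x y
      by_contra htop
      have hxy : le x y := by
        by_contra hn
        rw [hvanish x y hn] at htop
        simp at htop
      set K : Set (X × ℝ) := {(x, 0), (y, 0)} with hKdef
      have hKc : IsCompact K := (Set.toFinite K).isCompact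
      have hcomp := (h K hKc).image continuous_snd
      obtain ⟨M, hM⟩ := hcomp.bddAbove
      have hmem : ∀ t : ℝ, 0 ≤ t →
          (y, t) ∈ {Q : X × ℝ | (∃ P ∈ K, R P Q) ∧ (∃ S ∈ K, R Q S)} := by
        intro t ht
        constructor
        · refine ⟨(x, 0), Or.inl rfl, (hR _ _).2 ⟨hxy, ?_⟩⟩
          simp only [htop, EReal.coe_ennreal_top, EReal.coe_zero]
          rw [zero_add]
          exact le_top
        · refine ⟨(y, 0), Or.inr rfl, (hR _ _).2 ⟨hrefl y, ?_⟩⟩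
          simp only [hdiag, EReal.coe_ennreal_zero, add_zero, EReal.coe_zero]
          exact_mod_cast ht
      have h1 : max M 0 + 1 ≤ M := hM ⟨(y, max M 0 + 1),
        hmem _ (by positivity), rfl⟩
      have h2 : M ≤ max M 0 := le_max_left _ _
      linarith
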